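/- Frequency-shift identity: for t > 0 and points x₀,...,x_j, t · e^{−t[x₀,...,x_j]} = −Σ_{m=0}^{j} e^{−t[x₀,...,x_j,x_m]}, where e^{−t[⋯]} denotes the divided difference of x ↦ e^{−tx} over the listed points (with x_m repeated). -/

import Mathlib

/-- Complete homogeneous symmetric polynomial of degree `m` evaluated on a list. -/
noncomputable def hSym (m : ℕ) (xs : List ℂ) : ℂ :=
  ∑ k ∈ Finset.Nat.antidiagonalTuple xs.length m, ∏ i : Fin xs.length, xs.get i ^ k i

/-- Divided difference of an entire function over a list of points (multisets allowed),
via the series `f[x₀,...,x_q] = Σ_m f^{(q+m)}(0)/(q+m)! · h_m(x₀,...,x_q)`. -/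
noncomputable def divDiff (f : ℂ → ℂ) (xs : List ℂ) : ℂ :=
  ∑' m : ℕ, iteratedDeriv (xs.length - 1 + m) f 0 /
    (Nat.factorial (xs.length - 1 + m) : ℂ) * hSym m xs

/-- Divided difference of the exponential `x ↦ exp (t * x)` over a list of points. -/
noncomputable def expDD (t : ℂ) (xs : List ℂ) : ℂ :=
  divDiff (fun z => Complex.exp (t * z)) xs

open Finset

/-- Auxiliary: complete homogeneous symmetric function on a tuple. -/
noncomputable def hF (n N : ℕ) (x : Fin N → ℂ) : ℂ :=
  ∑ k ∈ Finset.Nat.antidiagonalTuple N n, ∏ i : Fin N, x i ^ k i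

lemma hSym_congr (n : ℕ) (xs : List ℂ) {N : ℕ} (h : xs.length = N) (x : Fin N → ℂ)
    (hx : ∀ i : Fin xs.length, xs.get i = x (Fin.cast h i)) :
    hSym n xs = hF n N x := by
  subst h
  unfold hSym hF
  refine Finset.sum_congr rfl fun k _ => Finset.prod_congr rfl fun i _ => ?_
  rw [hx i]
  congr 1

lemma hSym_ofFn (n N : ℕ) (x : Fin N → ℂ) : hSym n (List.ofFn x) = hF n N x := by
  refine hSym_congr n _ List.length_ofFn x fun i => ?_
  rw [List.get_ofFn]

lemma ofFn_snoc {N : ℕ} (x : Fin N → ℂ) (y : ℂ) :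
    List.ofFn x ++ [y] = List.ofFn (Fin.snoc x y) := by
  rw [List.ofFn_succ' (Fin.snoc x y)]
  simp [Fin.snoc_castSucc, List.concat_eq_append]

lemma hF_bound (n N : ℕ) (x : Fin N → ℂ) :
    ‖hF n N x‖ ≤ ((2:ℝ) ^ N) ^ n * (1 + ∑ i, ‖x i‖) ^ n := by
  set R : ℝ := 1 + ∑ i, ‖x i‖ with hR
  have hR0 : (0:ℝ) ≤ R := by positivity
  have hxR : ∀ i, ‖x i‖ ≤ R := by
    intro i
    have : ‖x i‖ ≤ ∑ i, ‖x i‖ :=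
      Finset.single_le_sum (fun i _ => norm_nonneg (x i)) (mem_univ i)
    linarith
  calc ‖hF n N x‖ ≤ ∑ k ∈ Finset.Nat.antidiagonalTuple N n, ‖∏ i : Fin N, x i ^ k i‖ :=
        norm_sum_le _ _
    _ ≤ ∑ k ∈ Finset.Nat.antidiagonalTuple N n, R ^ n := by
        refine Finset.sum_le_sum fun k hk => ?_
        rw [norm_prod]
        have hsum : ∑ i, k i = n := (Finset.Nat.mem_antidiagonalTuple).1 hk
        calc ∏ i, ‖x i ^ k i‖ ≤ ∏ i, R ^ k i := by
              refine Finset.prod_le_prod (fun i _ => norm_nonneg _) fun i _ => ?_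
              rw [norm_pow]
              exact pow_le_pow_left₀ (norm_nonneg _) (hxR i) _
          _ = R ^ n := by rw [Finset.prod_pow_eq_pow_sum, hsum]
    _ = (Finset.Nat.antidiagonalTuple N n).card * R ^ n := by rw [Finset.sum_const, nsmul_eq_mul]
    _ ≤ ((2:ℝ) ^ N) ^ n * R ^ n := by
        refine mul_le_mul_of_nonneg_right ?_ (by positivity)
        have hcard : (Finset.Nat.antidiagonalTuple N n).card ≤ (n + 1) ^ N := by
          have hsub : Finset.Nat.antidiagonalTuple N n ⊆
              Fintype.piFinset fun _ : Fin N => Finset.range (n + 1) := by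
            intro k hk
            rw [Fintype.mem_piFinset]
            intro i
            rw [Finset.mem_range, Nat.lt_succ_iff]
            rw [Finset.Nat.mem_antidiagonalTuple] at hk
            exact hk ▸ Finset.single_le_sum (f := k) (fun _ _ => Nat.zero_le _) (mem_univ i)
          calc (Finset.Nat.antidiagonalTuple N n).card
              ≤ (Fintype.piFinset fun _ : Fin N => Finset.range (n + 1)).card :=
                Finset.card_le_card hsub
            _ = (n + 1) ^ N := by simp [Fintype.card_piFinset]
        calc ((Finset.Nat.antidiagonalTuple N n).card : ℝ) ≤ ((n+1)^N : ℕ) := by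
              exact_mod_cast hcard
          _ ≤ ((2^n)^N : ℕ) := by
              exact_mod_cast Nat.pow_le_pow_left (Nat.succ_le_of_lt (Nat.lt_two_pow_self (n := n))) N
          _ = ((2:ℝ)^N)^n := by push_cast; rw [← pow_mul, ← pow_mul, Nat.mul_comm]

lemma summable_coeff (c : ℂ) (q N : ℕ) (x : Fin N → ℂ) :
    Summable (fun n : ℕ => c ^ (q + n) / ((Nat.factorial (q + n) : ℂ)) * hF n N x) := by
  set R : ℝ := 1 + ∑ i, ‖x i‖ with hR
  have hR0 : (0:ℝ) ≤ R := by positivity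
  refine Summable.of_norm_bounded
    (g := fun n => ‖c‖ ^ q * (((2:ℝ) ^ N * R * ‖c‖) ^ n / n.factorial))
    ((Real.summable_pow_div_factorial _).mul_left _) fun n => ?_
  rw [norm_mul, norm_div, norm_pow, Complex.norm_natCast]
  have h1 : ‖c‖ ^ (q + n) / (Nat.factorial (q + n) : ℝ) ≤ ‖c‖ ^ q * (‖c‖ ^ n / n.factorial) := by
    rw [pow_add, mul_div_assoc]
    refine mul_le_mul_of_nonneg_left ?_ (by positivity)
    refine div_le_div_of_nonneg_left (by positivity) (by positivity) ?_
    exact_mod_cast Nat.factorial_le (Nat.le_add_left n q)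
  calc ‖c‖ ^ (q + n) / (Nat.factorial (q + n) : ℝ) * ‖hF n N x‖
      ≤ (‖c‖ ^ q * (‖c‖ ^ n / n.factorial)) * (((2:ℝ) ^ N) ^ n * R ^ n) := by
        refine mul_le_mul h1 (hF_bound n N x) (norm_nonneg _) (by positivity)
    _ = ‖c‖ ^ q * (((2:ℝ) ^ N * R * ‖c‖) ^ n / n.factorial) := by
        rw [mul_pow, mul_pow]; ring

lemma hF_snoc (n N : ℕ) (x : Fin N → ℂ) (y : ℂ) :
    hF n (N + 1) (Fin.snoc x y) =
      ∑ ab ∈ Finset.HasAntidiagonal.antidiagonal n, y ^ ab.1 * hF ab.2 N x := by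
  unfold hF
  simp_rw [Finset.mul_sum]
  rw [Finset.sum_sigma']
  refine Finset.sum_bij'
    (fun k _ => ⟨(k (Fin.last N), ∑ i : Fin N, k i.castSucc), fun i => k i.castSucc⟩)
    (fun p _ => Fin.snoc p.2 p.1.1) ?_ ?_ ?_ ?_ ?_
  · intro k hk
    rw [Finset.Nat.mem_antidiagonalTuple] at hk
    rw [Finset.mem_sigma, Finset.HasAntidiagonal.mem_antidiagonal, Finset.Nat.mem_antidiagonalTuple]
    dsimp only
    refine ⟨?_, rfl⟩
    rw [← hk, Fin.sum_univ_castSucc]; ring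
  · intro p hp
    rw [Finset.mem_sigma, Finset.HasAntidiagonal.mem_antidiagonal, Finset.Nat.mem_antidiagonalTuple] at hp
    rw [Finset.Nat.mem_antidiagonalTuple, Fin.sum_univ_castSucc]
    simp only [Fin.snoc_castSucc, Fin.snoc_last]
    rw [hp.2, Nat.add_comm, hp.1]
  · intro k hk
    dsimp only
    funext i
    refine Fin.lastCases ?_ (fun i => ?_) i <;> simp
  · intro p hp
    rw [Finset.mem_sigma, Finset.HasAntidiagonal.mem_antidiagonal, Finset.Nat.mem_antidiagonalTuple] at hp
    rcases p with ⟨⟨a, b⟩, k⟩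
    dsimp only at hp ⊢
    simp only [Fin.snoc_castSucc, Fin.snoc_last]
    rw [hp.2]
  · intro k hk
    dsimp only
    rw [Fin.prod_univ_castSucc]
    simp only [Fin.snoc_castSucc, Fin.snoc_last]
    ring

lemma prod_pow_update (N : ℕ) (x : Fin N → ℂ) (k : Fin N → ℕ) (m : Fin N) (b : ℕ) :
    ∏ i, x i ^ (Function.update k m b) i = x m ^ b * ∏ i ∈ univ \ {m}, x i ^ k i := by
  have h : (fun i => x i ^ Function.update k m b i) =
      Function.update (fun i => x i ^ k i) m (x m ^ b) := by
    funext i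
    by_cases h : i = m
    · subst h; simp
    · simp [Function.update_of_ne h]
  rw [h, Finset.prod_update_of_mem (mem_univ m)]

lemma count_m (n N : ℕ) (x : Fin N → ℂ) (m : Fin N) :
    ∑ ab ∈ Finset.HasAntidiagonal.antidiagonal n, (x m) ^ ab.1 * hF ab.2 N x =
      ∑ κ ∈ Finset.Nat.antidiagonalTuple N n, ((κ m : ℂ) + 1) * ∏ i, x i ^ κ i := by
  unfold hF
  simp_rw [Finset.mul_sum]
  rw [Finset.sum_sigma']
  have hrhs : ∀ κ : Fin N → ℕ, ((κ m : ℂ) + 1) * ∏ i, x i ^ κ i =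
      ∑ _a ∈ Finset.range (κ m + 1), ∏ i, x i ^ κ i := by
    intro κ
    rw [Finset.sum_const, Finset.card_range, nsmul_eq_mul]
    push_cast; ring
  simp_rw [hrhs]
  rw [Finset.sum_sigma']
  refine Finset.sum_bij'
    (fun p _ => ⟨Function.update p.2 m (p.2 m + p.1.1), p.1.1⟩)
    (fun q _ => ⟨(q.2, n - q.2), Function.update q.1 m (q.1 m - q.2)⟩) ?_ ?_ ?_ ?_ ?_
  · intro p hp
    rw [Finset.mem_sigma, Finset.HasAntidiagonal.mem_antidiagonal, Finset.Nat.mem_antidiagonalTuple] at hp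
    rw [Finset.mem_sigma, Finset.Nat.mem_antidiagonalTuple]
    dsimp only
    constructor
    · rw [Finset.sum_update_of_mem (mem_univ m)]
      have h2 : ∑ i, p.2 i = p.2 m + ∑ i ∈ univ \ {m}, p.2 i := by
        rw [← Finset.sum_update_of_mem (mem_univ m), Function.update_eq_self]
      omega
    · rw [Finset.mem_range, Function.update_self]; omega
  · intro q hq
    rw [Finset.mem_sigma, Finset.Nat.mem_antidiagonalTuple, Finset.mem_range] at hq
    rw [Finset.mem_sigma, Finset.HasAntidiagonal.mem_antidiagonal, Finset.Nat.mem_antidiagonalTuple]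
    dsimp only
    have hle : q.2 ≤ q.1 m := by omega
    have hmn : q.1 m ≤ n := by
      rw [← hq.1]
      exact Finset.single_le_sum (f := q.1) (fun _ _ => Nat.zero_le _) (mem_univ m)
    constructor
    · omega
    · rw [Finset.sum_update_of_mem (mem_univ m)]
      have h2 : ∑ i, q.1 i = q.1 m + ∑ i ∈ univ \ {m}, q.1 i := by
        rw [← Finset.sum_update_of_mem (mem_univ m), Function.update_eq_self]
      omega
  · intro p hp
    rw [Finset.mem_sigma, Finset.HasAntidiagonal.mem_antidiagonal, Finset.Nat.mem_antidiagonalTuple] at hp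
    rcases p with ⟨⟨a, b⟩, k⟩
    dsimp only at hp ⊢
    rw [Function.update_self, Function.update_idem, Nat.add_sub_cancel, Function.update_eq_self]
    have : a + b = n := hp.1
    rw [show n - a = b by omega]
  · intro q hq
    rw [Finset.mem_sigma, Finset.Nat.mem_antidiagonalTuple, Finset.mem_range] at hq
    rcases q with ⟨κ, a⟩
    dsimp only at hq ⊢
    rw [Function.update_self, Function.update_idem, Nat.sub_add_cancel (by omega),
      Function.update_eq_self]
  · intro p hp
    rw [Finset.mem_sigma, Finset.HasAntidiagonal.mem_antidiagonal, Finset.Nat.mem_antidiagonalTuple] at hp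
    dsimp only
    rw [prod_pow_update, pow_add]
    have h2 : ∏ i, x i ^ p.2 i = x m ^ p.2 m * ∏ i ∈ univ \ {m}, x i ^ p.2 i := by
      rw [← prod_pow_update N x p.2 m (p.2 m), Function.update_eq_self]
    rw [h2]; ring

lemma sum_snoc (n N : ℕ) (x : Fin N → ℂ) :
    ∑ m : Fin N, hF n (N + 1) (Fin.snoc x (x m)) = ((N + n : ℕ) : ℂ) * hF n N x := by
  simp_rw [hF_snoc, count_m]
  rw [Finset.sum_comm]
  unfold hF
  rw [Finset.mul_sum]
  refine Finset.sum_congr rfl fun κ hκ => ?_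
  rw [← Finset.sum_mul]
  congr 1
  have hs : ∑ i, κ i = n := Finset.Nat.mem_antidiagonalTuple.1 hκ
  have : ∑ m : Fin N, ((κ m : ℂ) + 1) = ((∑ m, κ m : ℕ) : ℂ) + N := by
    rw [Finset.sum_add_distrib]
    push_cast
    simp
  rw [this, hs]
  push_cast
  ring

lemma expDD_eq (c : ℂ) (q : ℕ) (x : Fin (q + 1) → ℂ) :
    expDD c (List.ofFn x) =
      ∑' n : ℕ, c ^ (q + n) / ((Nat.factorial (q + n) : ℂ)) * hF n (q + 1) x := by
  unfold expDD divDiff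
  simp only [List.length_ofFn, Nat.add_sub_cancel]
  refine tsum_congr fun n => ?_
  rw [hSym_ofFn n (q + 1) x]
  congr 2
  rw [iteratedDeriv_cexp_const_mul]
  simp

/-- Frequency-shift identity:
`t · e^{−t[x₀,...,x_j]} = −Σ_{m=0}^{j} e^{−t[x₀,...,x_j,x_m]}`. -/
theorem expDD_freq_shift (t : ℝ) (ht : 0 < t) (j : ℕ) (x : Fin (j + 1) → ℂ) :
    (t : ℂ) * expDD (-(t : ℂ)) (List.ofFn x) =
      - ∑ m : Fin (j + 1), expDD (-(t : ℂ)) (List.ofFn x ++ [x m]) := by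
  set c : ℂ := -(t : ℂ) with hc
  have hR : ∀ m : Fin (j + 1), expDD c (List.ofFn x ++ [x m]) =
      ∑' n : ℕ, c ^ (j + 1 + n) / ((Nat.factorial (j + 1 + n) : ℂ)) *
        hF n (j + 1 + 1) (Fin.snoc x (x m)) := by
    intro m
    rw [ofFn_snoc]
    exact expDD_eq c (j + 1) _
  rw [expDD_eq c j x]
  simp_rw [hR]
  rw [← Summable.tsum_finsetSum (fun m _ => summable_coeff c (j + 1) (j + 1 + 1) _), ← tsum_neg,
    ← tsum_mul_left]
  refine tsum_congr fun n => ?_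
  have hsum : ∑ m : Fin (j + 1), c ^ (j + 1 + n) / ((Nat.factorial (j + 1 + n) : ℂ)) *
      hF n (j + 1 + 1) (Fin.snoc x (x m)) =
      c ^ (j + 1 + n) / ((Nat.factorial (j + 1 + n) : ℂ)) *
        (((j + 1 + n : ℕ) : ℂ) * hF n (j + 1) x) := by
    rw [← Finset.mul_sum, sum_snoc n (j + 1) x]
  rw [hsum]
  have hfac : ((Nat.factorial (j + 1 + n) : ℂ)) =
      ((j + 1 + n : ℕ) : ℂ) * ((Nat.factorial (j + n) : ℂ)) := by
    rw [show j + 1 + n = (j + n) + 1 by omega, Nat.factorial_succ]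
    push_cast
    ring
  have hne1 : ((Nat.factorial (j + n) : ℂ)) ≠ 0 := by
    exact_mod_cast Nat.cast_ne_zero.2 (Nat.factorial_ne_zero _)
  have hne2 : ((j + 1 + n : ℕ) : ℂ) ≠ 0 := Nat.cast_ne_zero.2 (by omega)
  have hpow : c ^ (j + 1 + n) = c * c ^ (j + n) := by
    rw [show j + 1 + n = (j + n) + 1 by omega, pow_succ]
    ring
  rw [hfac, hpow]
  have key : c * c ^ (j + n) / (((j + 1 + n : ℕ) : ℂ) * (Nat.factorial (j + n) : ℂ)) *
      (((j + 1 + n : ℕ) : ℂ) * hF n (j + 1) x)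
      = c * (c ^ (j + n) / (Nat.factorial (j + n) : ℂ) * hF n (j + 1) x) := by
    generalize hF n (j + 1) x = H
    generalize hA : ((j + 1 + n : ℕ) : ℂ) = A at hne2
    generalize hFF : ((Nat.factorial (j + n) : ℕ) : ℂ) = F at hne1
    field_simp
  rw [key, hc]
  ring
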